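/- Haar average of the purity of a subsystem: for a Haar-random pure state |ψ⟩ on C^{d_A} ⊗ C^{d_B} with reduced state ρ_A = tr_B |ψ⟩⟨ψ|, the expectation of tr(ρ_A²) equals (d_A + d_B)/(d_A d_B + 1). -/

import Mathlib

open MeasureTheory

set_option linter.unusedSectionVars false

/-- Reduced density matrix on the first factor of a bipartite pure state. -/
noncomputable def rhoA {dA dB : ℕ} (ψ : Fin dA × Fin dB → ℂ) : Matrix (Fin dA) (Fin dA) ℂ :=
  Matrix.of fun a a' => ∑ b, ψ (a, b) * star (ψ (a', b))

namespace HaarPurity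

variable {ι : Type*} [Fintype ι] [DecidableEq ι]

noncomputable def mono (i j k l : ι) : (ι → ℂ) → ℂ :=
  fun ψ => ψ i * ψ j * (starRingEnd ℂ) (ψ k) * (starRingEnd ℂ) (ψ l)

lemma continuous_mono (i j k l : ι) : Continuous (mono i j k l) := by
  have h : ∀ m : ι, Continuous fun ψ : ι → ℂ => (starRingEnd ℂ) (ψ m) :=
    fun m => Complex.continuous_conj.comp (continuous_apply m)
  exact (((continuous_apply i).mul (continuous_apply j)).mul (h k)).mul (h l)

lemma integrable_mono (μ : Measure (ι → ℂ)) [IsProbabilityMeasure μ]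
    (hsupp : ∀ᵐ ψ ∂μ, ∑ x, Complex.normSq (ψ x) = 1) (i j k l : ι) :
    Integrable (mono i j k l) μ := by
  refine Integrable.mono' (integrable_const 1)
    (continuous_mono i j k l).aestronglyMeasurable ?_
  filter_upwards [hsupp] with ψ hψ
  have hb : ∀ x, ‖ψ x‖ ≤ 1 := by
    intro x
    have h1 : Complex.normSq (ψ x) ≤ 1 :=
      hψ ▸ Finset.single_le_sum (fun y _ => Complex.normSq_nonneg _) (Finset.mem_univ x)
    have h2 : Complex.normSq (ψ x) = ‖ψ x‖ ^ 2 := by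
      rw [Complex.normSq_eq_norm_sq]
    nlinarith [norm_nonneg (ψ x)]
  have : ‖mono i j k l ψ‖ = ‖ψ i‖ * ‖ψ j‖ * ‖ψ k‖ * ‖ψ l‖ := by
    simp [mono, norm_mul]
  rw [this]
  have h1 : ‖ψ i‖ * ‖ψ j‖ ≤ 1 := mul_le_one₀ (hb i) (norm_nonneg _) (hb j)
  have h2 : ‖ψ i‖ * ‖ψ j‖ * ‖ψ k‖ ≤ 1 := mul_le_one₀ h1 (norm_nonneg _) (hb k)
  exact mul_le_one₀ h2 (norm_nonneg _) (hb l)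

lemma continuous_mulVec (U : Matrix ι ι ℂ) : Continuous (fun ψ : ι → ℂ => U.mulVec ψ) := by
  refine continuous_pi fun x => ?_
  simp only [Matrix.mulVec, dotProduct]
  exact continuous_finset_sum _ fun i _ => continuous_const.mul (continuous_apply i)

lemma integral_comp_unitary (μ : Measure (ι → ℂ))
    (hinv : ∀ U ∈ Matrix.unitaryGroup ι ℂ,
      Measure.map (fun ψ => U.mulVec ψ) μ = μ)
    (U : Matrix ι ι ℂ) (hU : U ∈ Matrix.unitaryGroup ι ℂ)
    (f : (ι → ℂ) → ℂ) (hf : AEStronglyMeasurable f μ) :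
    ∫ ψ, f ψ ∂μ = ∫ ψ, f (U.mulVec ψ) ∂μ := by
  conv_lhs => rw [← hinv U hU]
  rw [integral_map (continuous_mulVec U).measurable.aemeasurable]
  rw [hinv U hU]; exact hf



variable {ι : Type*} [Fintype ι] [DecidableEq ι]


noncomputable def Mo (μ : Measure (ι → ℂ)) (i j k l : ι) : ℂ :=
  ∫ ψ, mono i j k l ψ ∂μ

def Dmat (x : ι) : Matrix ι ι ℂ :=
  Matrix.diagonal (fun t => if t = x then Complex.I else 1)

lemma Dmat_mem (x : ι) : Dmat x ∈ Matrix.unitaryGroup ι ℂ := by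
  rw [Matrix.mem_unitaryGroup_iff]
  rw [Matrix.star_eq_conjTranspose, Dmat, Matrix.diagonal_conjTranspose,
    Matrix.diagonal_mul_diagonal]
  ext p q
  rcases eq_or_ne p q with rfl | h
  · by_cases h2 : p = x <;>
      simp [Matrix.diagonal_apply, Matrix.one_apply, h2, Pi.star_def, Complex.star_def,
        Complex.mul_conj, Complex.normSq_I]
  · simp [Matrix.diagonal_apply, Matrix.one_apply, h]


lemma Mo_phase (μ : Measure (ι → ℂ))
    (hinv : ∀ U ∈ Matrix.unitaryGroup ι ℂ, Measure.map (fun ψ => U.mulVec ψ) μ = μ)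
    (x i j k l : ι) :
    Mo μ i j k l =
      (if i = x then Complex.I else 1) * (if j = x then Complex.I else 1) *
      (starRingEnd ℂ) (if k = x then Complex.I else 1) *
      (starRingEnd ℂ) (if l = x then Complex.I else 1) * Mo μ i j k l := by
  have h1 : Mo μ i j k l = ∫ ψ, mono i j k l ((Dmat x).mulVec ψ) ∂μ :=
    integral_comp_unitary μ hinv _ (Dmat_mem x) _ (continuous_mono i j k l).aestronglyMeasurable
  have h2 : (fun ψ : ι → ℂ => mono i j k l ((Dmat x).mulVec ψ)) =
      fun ψ => ((if i = x then Complex.I else 1) * (if j = x then Complex.I else 1) *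
      (starRingEnd ℂ) (if k = x then Complex.I else 1) *
      (starRingEnd ℂ) (if l = x then Complex.I else 1)) * mono i j k l ψ := by
    funext ψ
    simp only [mono, Dmat, Matrix.mulVec_diagonal, map_mul]
    ring
  calc Mo μ i j k l = ∫ ψ, mono i j k l ((Dmat x).mulVec ψ) ∂μ := h1
    _ = _ := by rw [h2]; exact integral_const_mul _ _

private lemma I_ne_one : Complex.I ≠ 1 := by
  intro h
  have := congrArg Complex.im h
  simp at this

private lemma neg_I_ne_one : -Complex.I ≠ 1 := by
  intro h
  have := congrArg Complex.im h
  simp at this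

private lemma cancel {α z : ℂ} (h : z = α * z) (hα : α ≠ 1) : z = 0 := by
  have h2 : (α - 1) * z = 0 := by rw [sub_mul, one_mul, ← h, sub_self]
  rcases mul_eq_zero.1 h2 with h3 | h3
  · exact absurd (sub_eq_zero.1 h3) hα
  · exact h3

lemma Mo_zero_i (μ : Measure (ι → ℂ))
    (hinv : ∀ U ∈ Matrix.unitaryGroup ι ℂ, Measure.map (fun ψ => U.mulVec ψ) μ = μ)
    {i j k l : ι} (hj : j ≠ i) (hk : k ≠ i) (hl : l ≠ i) : Mo μ i j k l = 0 := by
  have := Mo_phase μ hinv i i j k l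
  simp [hj, hk, hl] at this
  exact cancel this I_ne_one

lemma Mo_zero_j (μ : Measure (ι → ℂ))
    (hinv : ∀ U ∈ Matrix.unitaryGroup ι ℂ, Measure.map (fun ψ => U.mulVec ψ) μ = μ)
    {i j k l : ι} (hi : i ≠ j) (hk : k ≠ j) (hl : l ≠ j) : Mo μ i j k l = 0 := by
  have := Mo_phase μ hinv j i j k l
  simp [hi, hk, hl] at this
  exact cancel this I_ne_one

lemma Mo_zero_k (μ : Measure (ι → ℂ))
    (hinv : ∀ U ∈ Matrix.unitaryGroup ι ℂ, Measure.map (fun ψ => U.mulVec ψ) μ = μ)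
    {i j k l : ι} (hi : i ≠ k) (hj : j ≠ k) (hl : l ≠ k) : Mo μ i j k l = 0 := by
  have := Mo_phase μ hinv k i j k l
  simp [hi, hj, hl, Complex.conj_I] at this
  exact cancel (α := -Complex.I) (by linear_combination this) neg_I_ne_one

lemma Mo_zero_l (μ : Measure (ι → ℂ))
    (hinv : ∀ U ∈ Matrix.unitaryGroup ι ℂ, Measure.map (fun ψ => U.mulVec ψ) μ = μ)
    {i j k l : ι} (hi : i ≠ l) (hj : j ≠ l) (hk : k ≠ l) : Mo μ i j k l = 0 := by
  have := Mo_phase μ hinv l i j k l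
  simp [hi, hj, hk, Complex.conj_I] at this
  exact cancel (α := -Complex.I) (by linear_combination this) neg_I_ne_one

lemma Mo_zero_ij (μ : Measure (ι → ℂ))
    (hinv : ∀ U ∈ Matrix.unitaryGroup ι ℂ, Measure.map (fun ψ => U.mulVec ψ) μ = μ)
    {i k l : ι} (hk : k ≠ i) (hl : l ≠ i) : Mo μ i i k l = 0 := by
  have := Mo_phase μ hinv i i i k l
  simp [hk, hl, Complex.I_mul_I] at this
  exact cancel (α := (-1 : ℂ)) (by linear_combination this) (by norm_num)

lemma Mo_swap12 (μ : Measure (ι → ℂ)) (i j k l : ι) : Mo μ i j k l = Mo μ j i k l := by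
  unfold Mo mono; congr 1; funext ψ; ring

lemma Mo_swap34 (μ : Measure (ι → ℂ)) (i j k l : ι) : Mo μ i j k l = Mo μ i j l k := by
  unfold Mo mono; congr 1; funext ψ; ring



variable {ι : Type*} [Fintype ι] [DecidableEq ι]

noncomputable def rc : ℂ := ((Real.sqrt 2)⁻¹ : ℝ)

lemma rc_mul_rc : rc * rc = 1 / 2 := by
  have h : (Real.sqrt 2)⁻¹ * (Real.sqrt 2)⁻¹ = 1 / 2 := by
    rw [← mul_inv, Real.mul_self_sqrt (by norm_num)]
    norm_num
  rw [rc, ← Complex.ofReal_mul, h]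
  norm_num

lemma conj_rc : (starRingEnd ℂ) rc = rc := Complex.conj_ofReal _

noncomputable def Rmat (x y : ι) : Matrix ι ι ℂ :=
  Matrix.of fun p q =>
    if p = x then (if q = x then rc else if q = y then rc else 0)
    else if p = y then (if q = x then rc else if q = y then -rc else 0)
    else if q = p then 1 else 0

lemma sum_split_two {x y : ι} (hxy : x ≠ y) (f : ι → ℂ)
    (h0 : ∀ r, r ≠ x → r ≠ y → f r = 0) : ∑ r, f r = f x + f y := by
  rw [← Finset.sum_subset (Finset.subset_univ ({x, y} : Finset ι))]
  · rw [Finset.sum_pair hxy]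
  · intro r _ hr
    simp only [Finset.mem_insert, Finset.mem_singleton, not_or] at hr
    exact h0 r hr.1 hr.2

lemma Rmat_mem {x y : ι} (hxy : x ≠ y) : Rmat x y ∈ Matrix.unitaryGroup ι ℂ := by
  rw [Matrix.mem_unitaryGroup_iff, Matrix.star_eq_conjTranspose]
  ext p q
  rw [Matrix.mul_apply, Matrix.one_apply]
  simp only [Matrix.conjTranspose_apply]
  by_cases hp : p = x
  · subst hp
    by_cases hq : q = p
    · subst hq
      rw [sum_split_two hxy _ (fun r h1 h2 => by simp [Rmat, h1, h2])]
      simp [Rmat, hxy, hxy.symm, conj_rc]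
      linear_combination 2 * rc_mul_rc
    · by_cases hq' : q = y
      · subst hq'
        rw [sum_split_two hxy _ (fun r h1 h2 => by simp [Rmat, h1, h2])]
        simp [Rmat, hxy, hxy.symm, conj_rc, if_neg hq]
      · rw [sum_split_two hxy _ (fun r h1 h2 => by simp [Rmat, h1, h2])]
        have hq2 : ¬q = p := hq
        simp [Rmat, hxy, hxy.symm, hq2, hq', Ne.symm hq2, Ne.symm hq']
  · by_cases hp' : p = y
    · subst hp'
      by_cases hq : q = x
      · subst hq
        rw [sum_split_two hxy _ (fun r h1 h2 => by simp [Rmat, h1, h2])]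
        simp [Rmat, hxy, hxy.symm, conj_rc, Ne.symm hxy]
      · by_cases hq' : q = p
        · subst hq'
          rw [sum_split_two hxy _ (fun r h1 h2 => by simp [Rmat, h1, h2])]
          simp [Rmat, hxy, hxy.symm, conj_rc, Ne.symm hxy]
          linear_combination 2 * rc_mul_rc
        · rw [sum_split_two hxy _ (fun r h1 h2 => by simp [Rmat, h1, h2])]
          simp [Rmat, hxy, hxy.symm, hq, hq', Ne.symm hq', Ne.symm hq]
    · by_cases hq : q = x
      · subst hq
        rw [Finset.sum_eq_zero, if_neg hp]
        intro r _
        by_cases hr : r = p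
        · subst hr
          simp [Rmat, hp, hp']
        · simp [Rmat, hp, hp', hr]
      · by_cases hq' : q = y
        · subst hq'
          rw [Finset.sum_eq_zero, if_neg hp']
          intro r _
          by_cases hr : r = p
          · subst hr
            simp [Rmat, hp, hp']
          · simp [Rmat, hp, hp', hr]
        · by_cases hpq : p = q
          · subst hpq
            rw [if_pos rfl, Finset.sum_eq_single p]
            · simp [Rmat, hp, hp']
            · intro b _ hb
              simp [Rmat, hp, hp', hb]
            · intro h
              exact absurd (Finset.mem_univ p) h
          · rw [if_neg hpq, Finset.sum_eq_zero]
            intro r _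
            by_cases hr : r = p
            · subst hr
              simp [Rmat, hp, hp', hq, hq', hpq]
            · simp [Rmat, hp, hp', hr]



lemma Rmat_mulVec_x {x y : ι} (hxy : x ≠ y) (ψ : ι → ℂ) :
    (Rmat x y).mulVec ψ x = rc * ψ x + rc * ψ y := by
  show ∑ r, Rmat x y x r * ψ r = _
  rw [sum_split_two hxy _ (fun r h1 h2 => by simp [Rmat, h1, h2])]
  simp [Rmat, hxy, hxy.symm]

lemma integral_quad_sum (μ : Measure (ι → ℂ)) [IsProbabilityMeasure μ]
    (hsupp : ∀ᵐ ψ ∂μ, ∑ x, Complex.normSq (ψ x) = 1) (S : Finset ι) :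
    ∫ ψ, ∑ a ∈ S, ∑ b ∈ S, ∑ k ∈ S, ∑ l ∈ S, (1/4 : ℂ) * mono a b k l ψ ∂μ
      = ∑ a ∈ S, ∑ b ∈ S, ∑ k ∈ S, ∑ l ∈ S, (1/4 : ℂ) * Mo μ a b k l := by
  have hint := integrable_mono μ hsupp
  have I1 : ∀ a b k l : ι, Integrable (fun ψ => (1/4 : ℂ) * mono a b k l ψ) μ :=
    fun a b k l => (hint a b k l).const_mul _
  have I2 : ∀ a b k : ι, Integrable (fun ψ => ∑ l ∈ S, (1/4 : ℂ) * mono a b k l ψ) μ :=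
    fun a b k => integrable_finset_sum _ fun l _ => I1 a b k l
  have I3 : ∀ a b : ι, Integrable (fun ψ => ∑ k ∈ S, ∑ l ∈ S, (1/4 : ℂ) * mono a b k l ψ) μ :=
    fun a b => integrable_finset_sum _ fun k _ => I2 a b k
  have I4 : ∀ a : ι, Integrable (fun ψ => ∑ b ∈ S, ∑ k ∈ S, ∑ l ∈ S, (1/4 : ℂ) * mono a b k l ψ) μ :=
    fun a => integrable_finset_sum _ fun b _ => I3 a b
  rw [integral_finset_sum _ (fun a _ => I4 a)]
  refine Finset.sum_congr rfl fun a _ => ?_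
  rw [integral_finset_sum _ (fun b _ => I3 a b)]
  refine Finset.sum_congr rfl fun b _ => ?_
  rw [integral_finset_sum _ (fun k _ => I2 a b k)]
  refine Finset.sum_congr rfl fun k _ => ?_
  rw [integral_finset_sum _ (fun l _ => I1 a b k l)]
  refine Finset.sum_congr rfl fun l _ => ?_
  rw [Mo]
  exact integral_const_mul _ _

lemma rot (μ : Measure (ι → ℂ)) [IsProbabilityMeasure μ]
    (hsupp : ∀ᵐ ψ ∂μ, ∑ x, Complex.normSq (ψ x) = 1)
    (hinv : ∀ U ∈ Matrix.unitaryGroup ι ℂ, Measure.map (fun ψ => U.mulVec ψ) μ = μ)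
    {x y : ι} (hxy : x ≠ y) :
    4 * Mo μ x x x x = Mo μ x x x x + Mo μ y y y y + 4 * Mo μ x y x y := by
  have expand : (fun ψ : ι → ℂ => mono x x x x ((Rmat x y).mulVec ψ)) =
      fun ψ => ∑ a ∈ ({x, y} : Finset ι), ∑ b ∈ ({x, y} : Finset ι),
        ∑ k ∈ ({x, y} : Finset ι), ∑ l ∈ ({x, y} : Finset ι), (1/4 : ℂ) * mono a b k l ψ := by
    funext ψ
    simp only [mono, Rmat_mulVec_x hxy, Finset.sum_pair hxy, map_add, map_mul, conj_rc]
    linear_combination ((rc * rc + 1/2) * ((ψ x + ψ y) * (ψ x + ψ y) *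
      ((starRingEnd ℂ) (ψ x) + (starRingEnd ℂ) (ψ y)) *
      ((starRingEnd ℂ) (ψ x) + (starRingEnd ℂ) (ψ y)))) * rc_mul_rc
  have h2 : Mo μ x x x x = ∑ a ∈ ({x, y} : Finset ι), ∑ b ∈ ({x, y} : Finset ι),
      ∑ k ∈ ({x, y} : Finset ι), ∑ l ∈ ({x, y} : Finset ι), (1/4 : ℂ) * Mo μ a b k l := by
    rw [Mo, integral_comp_unitary μ hinv _ (Rmat_mem hxy) _
        (continuous_mono x x x x).aestronglyMeasurable, expand,
      integral_quad_sum μ hsupp]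
  rw [Finset.sum_pair hxy] at h2
  simp only [Finset.sum_pair hxy] at h2
  rw [Mo_zero_l μ hinv hxy hxy hxy, Mo_zero_k μ hinv hxy hxy hxy,
    Mo_zero_ij μ hinv hxy.symm hxy.symm, Mo_zero_j μ hinv hxy hxy hxy,
    Mo_zero_i μ hinv hxy.symm hxy.symm hxy.symm,
    Mo_zero_i μ hinv hxy hxy hxy, Mo_zero_j μ hinv hxy.symm hxy.symm hxy.symm,
    Mo_zero_ij μ hinv hxy hxy, Mo_zero_k μ hinv hxy.symm hxy.symm hxy.symm,
    Mo_zero_l μ hinv hxy.symm hxy.symm hxy.symm] at h2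
  have hs1 : Mo μ x y y x = Mo μ x y x y := (Mo_swap34 μ x y x y).symm
  have hs2 : Mo μ y x x y = Mo μ x y x y := by
    rw [Mo_swap12 μ y x x y, Mo_swap34 μ x y x y]
  have hs3 : Mo μ y x y x = Mo μ x y x y := by
    rw [Mo_swap12 μ y x y x]
    exact (Mo_swap34 μ x y x y).symm
  rw [hs1, hs2, hs3] at h2
  linear_combination 4 * h2

lemma moments (μ : Measure (ι → ℂ)) [IsProbabilityMeasure μ]
    (hsupp : ∀ᵐ ψ ∂μ, ∑ x, Complex.normSq (ψ x) = 1)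
    (hinv : ∀ U ∈ Matrix.unitaryGroup ι ℂ, Measure.map (fun ψ => U.mulVec ψ) μ = μ)
    {x y : ι} (hxy : x ≠ y) :
    Mo μ y y y y = Mo μ x x x x ∧ Mo μ x y x y = Mo μ x x x x / 2 := by
  have h1 := rot μ hsupp hinv hxy
  have h2 := rot μ hsupp hinv hxy.symm
  have hs : Mo μ y x y x = Mo μ x y x y := by
    rw [Mo_swap12 μ y x y x, Mo_swap34 μ x y y x]
  rw [hs] at h2
  have hD : Mo μ y y y y = Mo μ x x x x := by linear_combination (h2 - h1) / 4
  refine ⟨hD, ?_⟩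
  linear_combination (-1/4 : ℂ) * h1 + (-1/4 : ℂ) * hD

lemma norm_sum (μ : Measure (ι → ℂ)) [IsProbabilityMeasure μ]
    (hsupp : ∀ᵐ ψ ∂μ, ∑ x, Complex.normSq (ψ x) = 1) :
    ∑ x, ∑ y, Mo μ x y x y = 1 := by
  have hint := integrable_mono μ hsupp
  have h1 : ∫ ψ, ∑ x, ∑ y, mono x y x y ψ ∂μ = ∑ x, ∑ y, Mo μ x y x y := by
    rw [integral_finset_sum _ (fun x _ => integrable_finset_sum _ fun y _ => hint x y x y)]
    exact Finset.sum_congr rfl fun x _ => integral_finset_sum _ (fun y _ => hint x y x y)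
  have h2 : ∀ᵐ ψ ∂μ, ∑ x, ∑ y, mono x y x y ψ = (1 : ℂ) := by
    filter_upwards [hsupp] with ψ hψ
    have e1 : ∑ x, ∑ y, mono x y x y ψ =
        (∑ x, ψ x * (starRingEnd ℂ) (ψ x)) * (∑ y, ψ y * (starRingEnd ℂ) (ψ y)) := by
      rw [Finset.sum_mul_sum]
      exact Finset.sum_congr rfl fun x _ => Finset.sum_congr rfl fun y _ => by
        simp only [mono]; ring
    have e2 : ∑ x, ψ x * (starRingEnd ℂ) (ψ x) = ((∑ x, Complex.normSq (ψ x) : ℝ) : ℂ) := by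
      push_cast
      exact Finset.sum_congr rfl fun x _ => Complex.mul_conj _
    rw [e1, e2, hψ]
    norm_num
  rw [← h1, integral_congr_ae h2]
  simp

lemma Mo_values (μ : Measure (ι → ℂ)) [IsProbabilityMeasure μ] [Nonempty ι]
    (hsupp : ∀ᵐ ψ ∂μ, ∑ x, Complex.normSq (ψ x) = 1)
    (hinv : ∀ U ∈ Matrix.unitaryGroup ι ℂ, Measure.map (fun ψ => U.mulVec ψ) μ = μ) :
    (∀ x : ι, Mo μ x x x x = 2 / (Fintype.card ι * (Fintype.card ι + 1)))
    ∧ (∀ x y : ι, x ≠ y → Mo μ x y x y = 1 / (Fintype.card ι * (Fintype.card ι + 1))) := by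
  obtain ⟨z0⟩ := ‹Nonempty ι›
  set m := Mo μ z0 z0 z0 z0 with hm
  have hdiag : ∀ x, Mo μ x x x x = m := by
    intro x
    by_cases h : x = z0
    · rw [h]
    · exact (moments μ hsupp hinv (Ne.symm h)).1
  have hoff : ∀ x y, x ≠ y → Mo μ x y x y = m / 2 := by
    intro x y h
    rw [(moments μ hsupp hinv h).2, hdiag x]
  set d : ℂ := (Fintype.card ι : ℂ) with hd
  have hsum : d * (m / 2) * (1 + d) = 1 := by
    have h1 : ∀ x : ι, ∑ y, Mo μ x y x y = m / 2 + d * (m / 2) := by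
      intro x
      have : ∀ y : ι, Mo μ x y x y = (if y = x then m / 2 else 0) + m / 2 := by
        intro y
        by_cases h : y = x
        · subst h
          rw [if_pos rfl, hdiag y]
          ring
        · rw [if_neg h, hoff x y (fun hh => h hh.symm), zero_add]
      rw [Finset.sum_congr rfl fun y _ => this y, Finset.sum_add_distrib]
      simp [Finset.card_univ, hd]
    have h2 := norm_sum μ hsupp
    rw [Finset.sum_congr rfl fun x _ => h1 x, Finset.sum_const, Finset.card_univ,
      nsmul_eq_mul] at h2
    rw [← hd] at h2
    linear_combination h2
  have hd0 : d ≠ 0 := by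
    simp only [hd, Ne, Nat.cast_eq_zero]
    exact Fintype.card_ne_zero
  have hd1 : d + 1 ≠ 0 := by
    simp only [hd]
    intro h
    have : ((Fintype.card ι + 1 : ℕ) : ℂ) = 0 := by push_cast; linear_combination h
    rw [Nat.cast_eq_zero] at this
    omega
  have hmval : m = 2 / (d * (d + 1)) := by
    field_simp
    linear_combination 2 * hsum
  constructor
  · intro x
    rw [hdiag x, hmval, hd]
  · intro x y h
    rw [hoff x y h, hmval, hd]
    field_simp

end HaarPurity

open HaarPurity in
theorem haar_average_purity (dA dB : ℕ) (hA : 0 < dA) (hB : 0 < dB)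
    (μ : Measure ((Fin dA × Fin dB) → ℂ)) [IsProbabilityMeasure μ]
    (hsupp : ∀ᵐ ψ ∂μ, ∑ x, Complex.normSq (ψ x) = 1)
    (hinv : ∀ U ∈ Matrix.unitaryGroup (Fin dA × Fin dB) ℂ,
      Measure.map (fun ψ => U.mulVec ψ) μ = μ) :
    ∫ ψ, ((rhoA ψ * rhoA ψ).trace).re ∂μ = ((dA : ℝ) + dB) / ((dA : ℝ) * dB + 1) := by
  haveI : Nonempty (Fin dA × Fin dB) := ⟨(⟨0, hA⟩, ⟨0, hB⟩)⟩
  have hint := integrable_mono μ hsupp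
  -- pointwise trace identity
  have htr : ∀ ψ : Fin dA × Fin dB → ℂ, ((rhoA ψ * rhoA ψ).trace) =
      ∑ a, ∑ a', ∑ b, ∑ b', mono (a, b) (a', b') (a', b) (a, b') ψ := by
    intro ψ
    simp only [Matrix.trace, Matrix.diag, Matrix.mul_apply, rhoA, Matrix.of_apply]
    refine Finset.sum_congr rfl fun a _ => Finset.sum_congr rfl fun a' _ => ?_
    rw [Finset.sum_mul_sum]
    refine Finset.sum_congr rfl fun b _ => Finset.sum_congr rfl fun b' _ => ?_
    simp only [mono, Complex.star_def]
    ring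
  -- integrability of the trace
  have htr_fun : (fun ψ : Fin dA × Fin dB → ℂ => (rhoA ψ * rhoA ψ).trace) =
      fun ψ => ∑ a, ∑ a', ∑ b, ∑ b', mono (a, b) (a', b') (a', b) (a, b') ψ :=
    funext htr
  have htr_int : Integrable (fun ψ : Fin dA × Fin dB → ℂ => (rhoA ψ * rhoA ψ).trace) μ := by
    rw [htr_fun]
    exact integrable_finset_sum _ fun a _ => integrable_finset_sum _ fun a' _ =>
      integrable_finset_sum _ fun b _ => integrable_finset_sum _ fun b' _ => hint _ _ _ _
  have h3 : ∫ ψ, ((rhoA ψ * rhoA ψ).trace).re ∂μ = (∫ ψ, (rhoA ψ * rhoA ψ).trace ∂μ).re := by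
    rw [← RCLike.re_to_complex]
    exact integral_re htr_int
  have h4 : ∫ ψ, (rhoA ψ * rhoA ψ).trace ∂μ =
      ∑ a, ∑ a', ∑ b, ∑ b', Mo μ (a, b) (a', b') (a', b) (a, b') := by
    rw [htr_fun]
    rw [integral_finset_sum _ (fun a _ => integrable_finset_sum _ fun a' _ =>
      integrable_finset_sum _ fun b _ => integrable_finset_sum _ fun b' _ => hint _ _ _ _)]
    refine Finset.sum_congr rfl fun a _ => ?_
    rw [integral_finset_sum _ (fun a' _ => integrable_finset_sum _ fun b _ =>
      integrable_finset_sum _ fun b' _ => hint _ _ _ _)]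
    refine Finset.sum_congr rfl fun a' _ => ?_
    rw [integral_finset_sum _ (fun b _ => integrable_finset_sum _ fun b' _ => hint _ _ _ _)]
    refine Finset.sum_congr rfl fun b _ => ?_
    exact integral_finset_sum _ fun b' _ => hint _ _ _ _
  -- values
  obtain ⟨hdiagv, hoffv⟩ := Mo_values μ hsupp hinv
  have hcard : (Fintype.card (Fin dA × Fin dB) : ℂ) = (dA : ℂ) * dB := by
    simp [Fintype.card_prod]
  set D : ℂ := (dA : ℂ) * dB with hD
  set mval : ℂ := 2 / (D * (D + 1)) with hmval
  set cval : ℂ := 1 / (D * (D + 1)) with hcval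
  have hdiag : ∀ x : Fin dA × Fin dB, Mo μ x x x x = mval := by
    intro x; rw [hdiagv x, hcard]
  have hoff : ∀ x y : Fin dA × Fin dB, x ≠ y → Mo μ x y x y = cval := by
    intro x y h; rw [hoffv x y h, hcard]
  have hterm : ∀ (a a' : Fin dA) (b b' : Fin dB),
      Mo μ (a, b) (a', b') (a', b) (a, b') =
      if a = a' then (if b = b' then mval else cval) else (if b = b' then cval else 0) := by
    intro a a' b b'
    by_cases ha : a = a'
    · subst ha
      by_cases hb : b = b'
      · subst hb
        rw [if_pos rfl, if_pos rfl, hdiag]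
      · rw [if_pos rfl, if_neg hb]
        exact hoff _ _ (fun h => hb (congrArg Prod.snd h))
    · by_cases hb : b = b'
      · subst hb
        rw [if_neg ha, if_pos rfl, Mo_swap34]
        exact hoff _ _ (fun h => ha (congrArg Prod.fst h))
      · rw [if_neg ha, if_neg hb]
        exact Mo_zero_i μ hinv
          (fun h => ha (congrArg Prod.fst h).symm)
          (fun h => ha (congrArg Prod.fst h).symm)
          (fun h => hb (congrArg Prod.snd h).symm)
  -- evaluate the quadruple sum
  have hsum_ite : ∀ {n : ℕ} (v1 v2 : ℂ),
      ∑ b : Fin n, ∑ b' : Fin n, (if b = b' then v1 else v2) =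
        (n : ℂ) * ((v1 - v2) + n * v2) := by
    intro n v1 v2
    have : ∀ b : Fin n, ∑ b' : Fin n, (if b = b' then v1 else v2) = (v1 - v2) + n * v2 := by
      intro b
      have : ∀ b' : Fin n, (if b = b' then v1 else v2) =
          (if b' = b then v1 - v2 else 0) + v2 := by
        intro b'
        by_cases h : b = b'
        · rw [if_pos h, if_pos h.symm]; ring
        · rw [if_neg h, if_neg (fun hh => h hh.symm)]; ring
      rw [Finset.sum_congr rfl fun b' _ => this b', Finset.sum_add_distrib, Finset.sum_ite_eq']
      simp [Finset.card_univ]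
    rw [Finset.sum_congr rfl fun b _ => this b, Finset.sum_const, Finset.card_univ,
      nsmul_eq_mul]
    simp
  have hval : ∑ a : Fin dA, ∑ a' : Fin dA, ∑ b : Fin dB, ∑ b' : Fin dB,
      Mo μ (a, b) (a', b') (a', b) (a, b') =
      (dA : ℂ) * (((dB : ℂ) * ((mval - cval) + dB * cval) - (dB : ℂ) * cval)
        + dA * ((dB : ℂ) * cval)) := by
    have hinner : ∀ a a' : Fin dA, ∑ b : Fin dB, ∑ b' : Fin dB,
        Mo μ (a, b) (a', b') (a', b) (a, b') =
        if a = a' then (dB : ℂ) * ((mval - cval) + dB * cval) else (dB : ℂ) * cval := by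
      intro a a'
      rw [Finset.sum_congr rfl fun b _ => Finset.sum_congr rfl fun b' _ => hterm a a' b b']
      by_cases ha : a = a'
      · rw [if_pos ha]
        simp only [if_pos ha]
        exact hsum_ite mval cval
      · rw [if_neg ha]
        simp only [if_neg ha]
        rw [hsum_ite cval 0]
        ring
    rw [Finset.sum_congr rfl fun a _ => Finset.sum_congr rfl fun a' _ => hinner a a']
    have := hsum_ite (n := dA) ((dB : ℂ) * ((mval - cval) + dB * cval)) ((dB : ℂ) * cval)
    rw [this]
  -- final arithmetic
  have hD0 : D ≠ 0 := by
    simp only [hD]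
    exact mul_ne_zero (Nat.cast_ne_zero.mpr hA.ne') (Nat.cast_ne_zero.mpr hB.ne')
  have hD1 : D * (D + 1) ≠ 0 := by
    refine mul_ne_zero hD0 ?_
    have : ((dA * dB + 1 : ℕ) : ℂ) ≠ 0 := Nat.cast_ne_zero.mpr (by omega)
    intro h
    apply this
    push_cast
    rw [hD] at h
    linear_combination h
  have hfinal : (dA : ℂ) * (((dB : ℂ) * ((mval - cval) + dB * cval) - (dB : ℂ) * cval)
        + dA * ((dB : ℂ) * cval)) = ((((dA : ℝ) + dB) / ((dA : ℝ) * dB + 1) : ℝ) : ℂ) := by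
    have hre : ((((dA : ℝ) + dB) / ((dA : ℝ) * dB + 1) : ℝ) : ℂ) =
        ((dA : ℂ) + dB) / ((dA : ℂ) * dB + 1) := by
      push_cast
      ring
    rw [hre, hmval, hcval, hD]
    have h1 : (dA : ℂ) * dB + 1 ≠ 0 := by
      have : ((dA * dB + 1 : ℕ) : ℂ) ≠ 0 := Nat.cast_ne_zero.mpr (by omega)
      intro h
      apply this
      push_cast
      linear_combination h
    have hA' : (dA : ℂ) ≠ 0 := Nat.cast_ne_zero.mpr hA.ne'
    have hB' : (dB : ℂ) ≠ 0 := Nat.cast_ne_zero.mpr hB.ne'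
    field_simp
    ring
  rw [h3, h4, hval, hfinal, Complex.ofReal_re]
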